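/- arXiv:2605.21849 — 2 statements merged into one kernel-verified Lean document; each statement's English description precedes it below -/
import Mathlib

section
/- Let M be a real symmetric positive semidefinite d×d matrix with eigenvalues λ_1(M) ≥ … ≥ λ_d(M), let 1 ≤ r < d, and suppose the eigengap γ := λ_r(M) − λ_{r+1}(M) is strictly positive. Let Π_OOD be the orthogonal projector onto the span of eigenvectors of M corresponding to its r largest eigenvalues. Then for every d×d real orthogonal projection matrix Π of rank r (i.e., Π symmetric, Π² = Π, rank Π = r), the following two-sided bound holds: (γ/2)·‖Π_OOD − Π‖_F² ≤ tr[(Π_OOD − Π)·M] ≤ ((λ_1(M) − λ_d(M))/2)·‖Π_OOD − Π‖_F². -/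
open Matrix BigOperators

/-- Frobenius norm of a real matrix. -/
noncomputable def frobNorm {m n : ℕ} (A : Matrix (Fin m) (Fin n) ℝ) : ℝ :=
  Real.sqrt (∑ i, ∑ j, (A i j) ^ 2)

lemma trace_mul_vmv {d : ℕ} (X : Matrix (Fin d) (Fin d) ℝ) (a b : Fin d → ℝ) :
    Matrix.trace (X * vecMulVec a b) = b ⬝ᵥ (X *ᵥ a) := by
  simp only [Matrix.trace, Matrix.diag, Matrix.mul_apply, vecMulVec_apply, dotProduct,
    Matrix.mulVec, Finset.mul_sum]
  apply Finset.sum_congr rfl; intro j _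
  apply Finset.sum_congr rfl; intro i _
  ring

lemma quad_nonneg {d : ℕ} (P : Matrix (Fin d) (Fin d) ℝ) (hs : P.IsSymm) (hi : P * P = P)
    (v : Fin d → ℝ) : 0 ≤ v ⬝ᵥ P *ᵥ v := by
  have h1 : P = Pᵀ * P := by rw [hs.eq, hi]
  rw [h1, ← Matrix.mulVec_mulVec, Matrix.dotProduct_mulVec, Matrix.vecMul_transpose]
  exact Finset.sum_nonneg fun i _ => mul_self_nonneg _

lemma vmv_mulVec {d : ℕ} (a b v : Fin d → ℝ) :
    vecMulVec a b *ᵥ v = (b ⬝ᵥ v) • a := by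
  ext x
  simp only [Matrix.mulVec, vecMulVec_apply, dotProduct, Pi.smul_apply, smul_eq_mul,
    Finset.sum_mul]
  apply Finset.sum_congr rfl; intro i _; ring

lemma trace_idem {d : ℕ} (P : Matrix (Fin d) (Fin d) ℝ) (h : P * P = P) :
    Matrix.trace P = (P.rank : ℝ) := by
  set f := Matrix.toLin' P with hf
  have hproj : LinearMap.IsProj (LinearMap.range f) f := by
    constructor
    · intro x; exact LinearMap.mem_range_self f x
    · rintro x ⟨y, rfl⟩
      have : f ∘ₗ f = f := by
        rw [hf, ← Matrix.toLin'_mul, h]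
      exact congrFun (congrArg DFunLike.coe this) y
  have h1 : LinearMap.trace ℝ (Fin d → ℝ) f = (Module.finrank ℝ (LinearMap.range f) : ℝ) :=
    hproj.trace
  have h2 : Matrix.trace P = LinearMap.trace ℝ (Fin d → ℝ) f := by
    rw [LinearMap.trace_eq_matrix_trace ℝ (Pi.basisFun ℝ (Fin d)) f, hf,
      ← Matrix.toLin_eq_toLin', LinearMap.toMatrix_toLin]
  have h3 : P.rank = Module.finrank ℝ (LinearMap.range f) := by
    rw [Matrix.rank, hf]; congr 1
  rw [h2, h1, h3]

lemma resolution_of_identity {d : ℕ} (u : Fin d → Fin d → ℝ)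
    (hu : ∀ i j, u i ⬝ᵥ u j = if i = j then (1 : ℝ) else 0) :
    (∑ i, vecMulVec (u i) (u i)) = (1 : Matrix (Fin d) (Fin d) ℝ) := by
  have hUU : (Matrix.of u) * (Matrix.of u)ᵀ = 1 := by
    ext i j
    have := hu i j
    simpa [Matrix.mul_apply, Matrix.one_apply, dotProduct] using this
  have hUtU : (Matrix.of u)ᵀ * (Matrix.of u) = 1 := mul_eq_one_comm.mp hUU
  rw [← hUtU]
  ext a b
  simp [Matrix.mul_apply, vecMulVec_apply, Matrix.sum_apply, mul_comm]

/-- **Proposition 2 (Faithfulness gap controls the explainer-dependent term).**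
Let `M` be real symmetric PSD with eigenvalues `lam` in nonincreasing order along an
orthonormal eigenbasis `u`, let `1 ≤ r < d` with positive eigengap
`γ = λ_r(M) − λ_{r+1}(M)`, and let `P_OOD` be the top-`r` eigenprojector. Then for every
rank-`r` orthogonal projection matrix `P`,
`(γ/2)‖P_OOD − P‖_F² ≤ tr[(P_OOD − P)M] ≤ ((λ_1 − λ_d)/2)‖P_OOD − P‖_F²`. -/
theorem faithfulness_gap_controls_explainer_dependent_term
    {d r : ℕ} (hr : 1 ≤ r) (hrd : r < d)
    (M : Matrix (Fin d) (Fin d) ℝ) (hM : M.PosSemidef)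
    (lam : Fin d → ℝ) (hlam : Antitone lam)
    (u : Fin d → Fin d → ℝ)
    (hu : ∀ i j, u i ⬝ᵥ u j = if i = j then (1 : ℝ) else 0)
    (heig : ∀ i, M.mulVec (u i) = lam i • u i)
    (P_OOD : Matrix (Fin d) (Fin d) ℝ)
    (hPOOD : P_OOD = ∑ i ∈ Finset.univ.filter (fun i : Fin d => (i : ℕ) < r),
      vecMulVec (u i) (u i))
    (hgap : 0 < lam ⟨r - 1, by omega⟩ - lam ⟨r, hrd⟩)
    (P : Matrix (Fin d) (Fin d) ℝ)
    (hPsymm : P.IsSymm) (hPidem : P * P = P) (hPrank : P.rank = r) :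
    ((lam ⟨r - 1, by omega⟩ - lam ⟨r, hrd⟩) / 2) * frobNorm (P_OOD - P) ^ 2 ≤
        Matrix.trace ((P_OOD - P) * M) ∧
      Matrix.trace ((P_OOD - P) * M) ≤
        ((lam ⟨0, by omega⟩ - lam ⟨d - 1, by omega⟩) / 2) * frobNorm (P_OOD - P) ^ 2 := by
  classical
  set A : Finset (Fin d) := Finset.univ.filter (fun i : Fin d => (i : ℕ) < r) with hAdef
  set B : Finset (Fin d) := Finset.univ.filter (fun i : Fin d => ¬ (i : ℕ) < r) with hBdef
  set p : Fin d → ℝ := fun i => u i ⬝ᵥ P *ᵥ u i with hpdef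
  have hone : (∑ i, vecMulVec (u i) (u i)) = (1 : Matrix (Fin d) (Fin d) ℝ) :=
    resolution_of_identity u hu
  have hcard : A.card = r := by
    have hAeq : A = Finset.map (Fin.castLEEmb hrd.le) Finset.univ := by
      ext i
      simp only [hAdef, Finset.mem_filter, Finset.mem_univ, true_and, Finset.mem_map,
        Fin.castLEEmb_apply]
      constructor
      · intro h; exact ⟨⟨i, h⟩, by ext; simp⟩
      · rintro ⟨j, rfl⟩; simp [j.isLt]
    simp [hAeq]
  have hp0 : ∀ i, 0 ≤ p i := fun i => quad_nonneg P hPsymm hPidem (u i)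
  have hp1 : ∀ i, p i ≤ 1 := by
    intro i
    have hQs : (1 - P).IsSymm := by
      unfold Matrix.IsSymm
      rw [Matrix.transpose_sub, Matrix.transpose_one, hPsymm.eq]
    have hQi : (1 - P) * (1 - P) = 1 - P := by
      rw [sub_mul, one_mul, mul_sub, mul_one, hPidem]
      abel
    have hq := quad_nonneg (1 - P) hQs hQi (u i)
    have h2 : u i ⬝ᵥ (1 - P) *ᵥ u i = 1 - p i := by
      rw [Matrix.sub_mulVec, Matrix.one_mulVec, dotProduct_sub, hu i i]
      simp
      rfl
    rw [h2] at hq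
    linarith
  have htrP : Matrix.trace P = (r : ℝ) := by rw [trace_idem P hPidem, hPrank]
  -- trace of X equals sum of quadratic forms
  have htr_via : ∀ X : Matrix (Fin d) (Fin d) ℝ,
      Matrix.trace X = ∑ i, (u i ⬝ᵥ X *ᵥ u i) := by
    intro X
    conv_lhs => rw [← mul_one X, ← hone, Finset.mul_sum]
    rw [Matrix.trace_sum]
    exact Finset.sum_congr rfl fun i _ => trace_mul_vmv X (u i) (u i)
  have hsump : ∑ i, p i = (r : ℝ) := by
    rw [← htrP, htr_via P]
  have htrPM : Matrix.trace (P * M) = ∑ i, lam i * p i := by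
    rw [htr_via (P * M)]
    apply Finset.sum_congr rfl; intro i _
    rw [← Matrix.mulVec_mulVec, heig i, Matrix.mulVec_smul, dotProduct_smul]
    rfl
  have htrOM : Matrix.trace (P_OOD * M) = ∑ i ∈ A, lam i := by
    rw [hPOOD, Finset.sum_mul, Matrix.trace_sum]
    apply Finset.sum_congr rfl; intro i _
    rw [Matrix.trace_mul_comm, trace_mul_vmv, heig i, dotProduct_smul, hu i i]
    simp
  have htrOP : Matrix.trace (P_OOD * P) = ∑ i ∈ A, p i := by
    rw [hPOOD, Finset.sum_mul, Matrix.trace_sum]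
    apply Finset.sum_congr rfl; intro i _
    rw [Matrix.trace_mul_comm, trace_mul_vmv]
  have htrOO : Matrix.trace (P_OOD * P_OOD) = (r : ℝ) := by
    rw [hPOOD, Finset.sum_mul, Matrix.trace_sum]
    have hterm : ∀ i ∈ A,
        Matrix.trace (vecMulVec (u i) (u i) * ∑ j ∈ A, vecMulVec (u j) (u j)) = 1 := by
      intro i hi
      rw [Matrix.trace_mul_comm, Finset.sum_mul, Matrix.trace_sum]
      have : ∀ j ∈ A, Matrix.trace (vecMulVec (u j) (u j) * vecMulVec (u i) (u i))
          = if i = j then (1 : ℝ) else 0 := by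
        intro j _
        rw [trace_mul_vmv, vmv_mulVec, dotProduct_smul, smul_eq_mul, hu j i, hu i j]
        by_cases h : i = j
        · subst h; simp
        · have h' : ¬ j = i := fun e => h e.symm
          simp [h, h']
      rw [Finset.sum_congr rfl this, Finset.sum_ite_eq A i (fun _ => (1:ℝ)), if_pos hi]
    rw [Finset.sum_congr rfl hterm, Finset.sum_const, hcard]
    simp
  -- Frobenius norm squared as trace
  have hsymmD : (P_OOD - P)ᵀ = P_OOD - P := by
    rw [Matrix.transpose_sub, hPsymm.eq, hPOOD, Matrix.transpose_sum]
    congr 1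
    apply Finset.sum_congr rfl; intro i _
    ext x y
    simp [vecMulVec_apply, Matrix.transpose_apply, mul_comm]
  have hfr : frobNorm (P_OOD - P) ^ 2 = Matrix.trace ((P_OOD - P) * (P_OOD - P)) := by
    rw [frobNorm, Real.sq_sqrt (Finset.sum_nonneg fun i _ =>
      Finset.sum_nonneg fun j _ => sq_nonneg ((P_OOD - P) i j))]
    simp only [Matrix.trace, Matrix.diag, Matrix.mul_apply]
    apply Finset.sum_congr rfl; intro i _
    apply Finset.sum_congr rfl; intro j _
    have : (P_OOD - P) j i = (P_OOD - P) i j := by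
      conv_lhs => rw [← hsymmD]
      rfl
    rw [this]; ring
  have hfr2 : frobNorm (P_OOD - P) ^ 2 = 2 * (r : ℝ) - 2 * ∑ i ∈ A, p i := by
    rw [hfr]
    have hexp : (P_OOD - P) * (P_OOD - P)
        = P_OOD * P_OOD - P_OOD * P - P * P_OOD + P * P := by
      rw [sub_mul, mul_sub, mul_sub]; abel
    rw [hexp, Matrix.trace_add, Matrix.trace_sub, Matrix.trace_sub,
      Matrix.trace_mul_comm P P_OOD, htrOO, htrOP, hPidem, htrP]
    ring
  -- main trace value
  have hT : Matrix.trace ((P_OOD - P) * M)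
      = ∑ i ∈ A, lam i * (1 - p i) - ∑ i ∈ B, lam i * p i := by
    rw [sub_mul, Matrix.trace_sub, htrOM, htrPM]
    have hsplit : ∑ i, lam i * p i = ∑ i ∈ A, lam i * p i + ∑ i ∈ B, lam i * p i :=
      (Finset.sum_filter_add_sum_filter_not Finset.univ _ _).symm
    rw [hsplit]
    have hAB : ∑ i ∈ A, lam i * (1 - p i) = ∑ i ∈ A, lam i - ∑ i ∈ A, lam i * p i := by
      rw [← Finset.sum_sub_distrib]
      apply Finset.sum_congr rfl; intro i _; ring
    rw [hAB]; ring
  set S : ℝ := (r : ℝ) - ∑ i ∈ A, p i with hSdef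
  have hSA : ∑ i ∈ A, (1 - p i) = S := by
    rw [Finset.sum_sub_distrib, Finset.sum_const, hcard, hSdef]
    simp
  have hSB : ∑ i ∈ B, p i = S := by
    have hsplit : ∑ i ∈ A, p i + ∑ i ∈ B, p i = ∑ i, p i :=
      Finset.sum_filter_add_sum_filter_not Finset.univ _ _
    rw [hsump] at hsplit
    rw [hSdef]; linarith
  -- ordering facts
  have hmemA : ∀ i ∈ A, lam ⟨r - 1, by omega⟩ ≤ lam i := by
    intro i hi
    apply hlam
    have : (i : ℕ) < r := (Finset.mem_filter.mp hi).2
    show (i : ℕ) ≤ r - 1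
    omega
  have hmemB : ∀ i ∈ B, lam i ≤ lam ⟨r, hrd⟩ := by
    intro i hi
    apply hlam
    have : ¬ (i : ℕ) < r := (Finset.mem_filter.mp hi).2
    show r ≤ (i : ℕ)
    omega
  have hmemA' : ∀ i : Fin d, lam i ≤ lam ⟨0, by omega⟩ := by
    intro i
    apply hlam
    show 0 ≤ (i : ℕ); omega
  have hmemB' : ∀ i : Fin d, lam ⟨d - 1, by omega⟩ ≤ lam i := by
    intro i
    apply hlam
    show (i : ℕ) ≤ d - 1
    have := i.isLt; omega
  -- the four sum bounds
  have low1 : lam ⟨r - 1, by omega⟩ * S ≤ ∑ i ∈ A, lam i * (1 - p i) := by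
    rw [← hSA, Finset.mul_sum]
    apply Finset.sum_le_sum; intro i hi
    exact mul_le_mul_of_nonneg_right (hmemA i hi) (by linarith [hp1 i])
  have low2 : ∑ i ∈ B, lam i * p i ≤ lam ⟨r, hrd⟩ * S := by
    rw [← hSB, Finset.mul_sum]
    apply Finset.sum_le_sum; intro i hi
    exact mul_le_mul_of_nonneg_right (hmemB i hi) (hp0 i)
  have up1 : ∑ i ∈ A, lam i * (1 - p i) ≤ lam ⟨0, by omega⟩ * S := by
    rw [← hSA, Finset.mul_sum]
    apply Finset.sum_le_sum; intro i hi
    exact mul_le_mul_of_nonneg_right (hmemA' i) (by linarith [hp1 i])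
  have up2 : lam ⟨d - 1, by omega⟩ * S ≤ ∑ i ∈ B, lam i * p i := by
    rw [← hSB, Finset.mul_sum]
    apply Finset.sum_le_sum; intro i hi
    exact mul_le_mul_of_nonneg_right (hmemB' i) (hp0 i)
  have hF2S : frobNorm (P_OOD - P) ^ 2 = 2 * S := by
    rw [hfr2, hSdef]; ring
  constructor
  · rw [hF2S, hT]
    have : (lam ⟨r - 1, by omega⟩ - lam ⟨r, hrd⟩) / 2 * (2 * S)
        = lam ⟨r - 1, by omega⟩ * S - lam ⟨r, hrd⟩ * S := by ring
    rw [this]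
    linarith
  · rw [hF2S, hT]
    have : (lam ⟨0, by omega⟩ - lam ⟨d - 1, by omega⟩) / 2 * (2 * S)
        = lam ⟨0, by omega⟩ * S - lam ⟨d - 1, by omega⟩ * S := by ring
    rw [this]
    linarith
end

section
/- Let h_1ᶜ, …, h_Nᶜ ∈ ℝ^d and z_1ᶜ, …, z_Nᶜ ∈ ℝ^k be centered data (each family summing to zero), let Π̂ be a d×d real orthogonal projection matrix, let W̃ ∈ ℝ^{d×k}, and let λ_geom ≥ 0, λ_pres > 0. Define B := (1/N)Σ_i z_iᶜ(z_iᶜ)ᵀ + λ_pres·I_k and C := (1/N)Σ_i h_iᶜ(z_iᶜ)ᵀ + λ_pres·W̃. Then the strictly convex objective F(W) := (1/N)Σ_i ‖h_iᶜ − W z_iᶜ‖₂² + λ_geom·‖(I − Π̂)W‖_F² + λ_pres·‖W − W̃‖_F² over W ∈ ℝ^{d×k} has the unique minimizer W* = Π̂·C·B⁻¹ + (I − Π̂)·C·(B + λ_geom·I_k)⁻¹; equivalently, W* is the unique solution of the normal equation [λ_pres·I_d + λ_geom·(I_d − Π̂)]·W + W·(1/N)Σ_i z_iᶜ(z_iᶜ)ᵀ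 = (1/N)Σ_i h_iᶜ(z_iᶜ)ᵀ + λ_pres·W̃. -/
open Matrix BigOperators

private lemma frobNorm_sq {m n : ℕ} (A : Matrix (Fin m) (Fin n) ℝ) :
    frobNorm A ^ 2 = ∑ i, ∑ j, (A i j) ^ 2 :=
  Real.sq_sqrt (by positivity)

/-- entrywise inner product -/
private def gaeIP {m n : ℕ} (A B : Matrix (Fin m) (Fin n) ℝ) : ℝ :=
  ∑ i, ∑ j, A i j * B i j

private lemma gaeIP_trace {m n : ℕ} (A B : Matrix (Fin m) (Fin n) ℝ) :
    gaeIP A B = (Aᵀ * B).trace := by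
  simp only [gaeIP, Matrix.trace, Matrix.diag, Matrix.mul_apply, Matrix.transpose_apply]
  exact Finset.sum_comm

private lemma gaeIP_add_left {m n : ℕ} (A B C : Matrix (Fin m) (Fin n) ℝ) :
    gaeIP (A + B) C = gaeIP A C + gaeIP B C := by
  simp [gaeIP, add_mul, Finset.sum_add_distrib]

private lemma gaeIP_sub_left {m n : ℕ} (A B C : Matrix (Fin m) (Fin n) ℝ) :
    gaeIP (A - B) C = gaeIP A C - gaeIP B C := by
  simp [gaeIP, sub_mul, Finset.sum_sub_distrib]

private lemma gaeIP_smul_left {m n : ℕ} (c : ℝ) (A B : Matrix (Fin m) (Fin n) ℝ) :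
    gaeIP (c • A) B = c * gaeIP A B := by
  simp [gaeIP, Matrix.smul_apply, smul_eq_mul, Finset.mul_sum, mul_assoc]

private lemma gaeIP_sum_left {m n : ℕ} {ι : Type*} (s : Finset ι)
    (f : ι → Matrix (Fin m) (Fin n) ℝ) (B : Matrix (Fin m) (Fin n) ℝ) :
    gaeIP (∑ t ∈ s, f t) B = ∑ t ∈ s, gaeIP (f t) B := by
  classical
  induction s using Finset.induction_on with
  | empty => simp [gaeIP]
  | insert a s h ih => rw [Finset.sum_insert h, Finset.sum_insert h, gaeIP_add_left, ih]

private lemma gae_vecMulVec_mulVec_left {d k : ℕ} (Wm : Matrix (Fin d) (Fin k) ℝ)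
    (z : Fin k → ℝ) : vecMulVec (Wm *ᵥ z) z = Wm * vecMulVec z z := by
  ext i j
  simp only [vecMulVec_apply, Matrix.mul_apply, Matrix.mulVec, dotProduct,
    Finset.sum_mul]
  exact Finset.sum_congr rfl fun l _ => by ring

private lemma gae_dot_mulVec {d k : ℕ} (a : Fin d → ℝ) (z : Fin k → ℝ)
    (Dm : Matrix (Fin d) (Fin k) ℝ) :
    (∑ i, a i * (Dm *ᵥ z) i) = gaeIP (vecMulVec a z) Dm := by
  simp only [gaeIP, vecMulVec_apply, Matrix.mulVec, dotProduct, Finset.mul_sum]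
  exact Finset.sum_congr rfl fun i _ => Finset.sum_congr rfl fun j _ => by ring

private lemma gae_quad {k : ℕ} (z x : Fin k → ℝ) :
    x ⬝ᵥ (vecMulVec z z *ᵥ x) = (z ⬝ᵥ x) ^ 2 := by
  simp only [dotProduct, Matrix.mulVec, vecMulVec_apply]
  rw [sq, Finset.sum_mul]
  refine Finset.sum_congr rfl fun j _ => ?_
  rw [Finset.mul_sum, Finset.mul_sum]
  exact Finset.sum_congr rfl fun l _ => by ring

private lemma gae_sum_mulVec {k : ℕ} {ι : Type*} (s : Finset ι)
    (f : ι → Matrix (Fin k) (Fin k) ℝ) (x : Fin k → ℝ) :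
    (∑ i ∈ s, f i) *ᵥ x = ∑ i ∈ s, f i *ᵥ x := by
  classical
  induction s using Finset.induction_on with
  | empty => simp
  | insert a s h ih => rw [Finset.sum_insert h, Finset.sum_insert h, Matrix.add_mulVec, ih]

private lemma gae_dot_sum {k : ℕ} {ι : Type*} (s : Finset ι)
    (f : ι → Fin k → ℝ) (x : Fin k → ℝ) :
    x ⬝ᵥ (∑ i ∈ s, f i) = ∑ i ∈ s, x ⬝ᵥ f i := by
  classical
  induction s using Finset.induction_on with
  | empty => simp
  | insert a s h ih => rw [Finset.sum_insert h, Finset.sum_insert h, dotProduct_add, ih]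

/-- **GAE Step-2 closed-form decoder refit (Eqs. 8–11, Appendix A.6).**
For centered data `h_iᶜ, z_iᶜ`, an orthogonal projection matrix `Π̂`, `W̃ ∈ ℝ^{d×k}`,
`λ_geom ≥ 0`, `λ_pres > 0`, and
`B = (1/N)Σ z_iᶜ z_iᶜᵀ + λ_pres I`, `C = (1/N)Σ h_iᶜ z_iᶜᵀ + λ_pres W̃`, the strictly convex
objective `F(W) = (1/N)Σ‖h_iᶜ − W z_iᶜ‖² + λ_geom‖(I−Π̂)W‖_F² + λ_pres‖W−W̃‖_F²` has unique
minimizer `W* = Π̂ C B⁻¹ + (I−Π̂) C (B+λ_geom I)⁻¹`, which is also the unique solution of the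
normal equation `[λ_pres I + λ_geom (I−Π̂)]W + W·(1/N)Σ z_iᶜ z_iᶜᵀ = (1/N)Σ h_iᶜ z_iᶜᵀ + λ_pres W̃`. -/
theorem gae_step2_closed_form
    {d k N : ℕ} (hN : 0 < N)
    (hc : Fin N → Fin d → ℝ) (zc : Fin N → Fin k → ℝ)
    (hcenterh : (∑ i, hc i) = 0) (hcenterz : (∑ i, zc i) = 0)
    (Phat : Matrix (Fin d) (Fin d) ℝ)
    (hPsymm : Phat.IsSymm) (hPidem : Phat * Phat = Phat)
    (Wtilde : Matrix (Fin d) (Fin k) ℝ)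
    (lgeom lpres : ℝ) (hlgeom : 0 ≤ lgeom) (hlpres : 0 < lpres)
    (B : Matrix (Fin k) (Fin k) ℝ)
    (hB : B = (N : ℝ)⁻¹ • (∑ i, vecMulVec (zc i) (zc i)) + lpres • 1)
    (C : Matrix (Fin d) (Fin k) ℝ)
    (hC : C = (N : ℝ)⁻¹ • (∑ i, vecMulVec (hc i) (zc i)) + lpres • Wtilde)
    (F : Matrix (Fin d) (Fin k) ℝ → ℝ)
    (hF : F = fun W =>
      (N : ℝ)⁻¹ * (∑ i, ∑ j, (hc i j - W.mulVec (zc i) j) ^ 2) +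
        lgeom * frobNorm ((1 - Phat) * W) ^ 2 + lpres * frobNorm (W - Wtilde) ^ 2)
    (Wstar : Matrix (Fin d) (Fin k) ℝ)
    (hWstar : Wstar = Phat * C * B⁻¹ + (1 - Phat) * C * (B + lgeom • 1)⁻¹) :
    (∀ W : Matrix (Fin d) (Fin k) ℝ, W ≠ Wstar → F Wstar < F W) ∧
      ((lpres • (1 : Matrix (Fin d) (Fin d) ℝ) + lgeom • (1 - Phat)) * Wstar +
          Wstar * ((N : ℝ)⁻¹ • (∑ i, vecMulVec (zc i) (zc i))) =
        (N : ℝ)⁻¹ • (∑ i, vecMulVec (hc i) (zc i)) + lpres • Wtilde) ∧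
      (∀ W : Matrix (Fin d) (Fin k) ℝ,
        (lpres • (1 : Matrix (Fin d) (Fin d) ℝ) + lgeom • (1 - Phat)) * W +
            W * ((N : ℝ)⁻¹ • (∑ i, vecMulVec (zc i) (zc i))) =
          (N : ℝ)⁻¹ • (∑ i, vecMulVec (hc i) (zc i)) + lpres • Wtilde →
        W = Wstar) := by
  have hNr : (0:ℝ) < (N:ℝ) := by exact_mod_cast hN
  set S : Matrix (Fin k) (Fin k) ℝ := (N : ℝ)⁻¹ • (∑ i, vecMulVec (zc i) (zc i)) with hSdef
  set M : Matrix (Fin d) (Fin k) ℝ := (N : ℝ)⁻¹ • (∑ i, vecMulVec (hc i) (zc i)) with hMdef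
  set Q : Matrix (Fin d) (Fin d) ℝ := 1 - Phat with hQdef
  set B2 : Matrix (Fin k) (Fin k) ℝ := B + lgeom • 1 with hB2def
  clear_value S M Q B2
  -- projection algebra
  have hQsymm : Qᵀ = Q := by rw [hQdef, transpose_sub, transpose_one, hPsymm.eq]
  have hQidem : Q * Q = Q := by
    rw [hQdef, sub_mul, one_mul, mul_sub, mul_one, hPidem]; abel
  have hQP : Q * Phat = 0 := by rw [hQdef, sub_mul, one_mul, hPidem, sub_self]
  have hPQ : Phat * Q = 0 := by rw [hQdef, mul_sub, mul_one, hPidem, sub_self]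
  have hPQsum : Phat + Q = 1 := by rw [hQdef]; abel
  -- positivity / invertibility
  have quadS : ∀ x : Fin k → ℝ, x ⬝ᵥ (S *ᵥ x) = (N:ℝ)⁻¹ * ∑ i, (zc i ⬝ᵥ x) ^ 2 := by
    intro x
    rw [hSdef, smul_mulVec, dotProduct_smul, gae_sum_mulVec, gae_dot_sum,
      smul_eq_mul]
    congr 1
    exact Finset.sum_congr rfl fun i _ => gae_quad (zc i) x
  have hSher : S.IsHermitian := by
    show Sᴴ = S
    ext i j
    simp [hSdef, Matrix.conjTranspose_apply, Matrix.smul_apply, Matrix.sum_apply,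
      vecMulVec_apply, mul_comm]
  have hSpsd : S.PosSemidef := by
    refine Matrix.PosSemidef.of_dotProduct_mulVec_nonneg hSher fun x => ?_
    rw [star_trivial, quadS x]
    positivity
  have hBpd : B.PosDef := by
    rw [hB]
    exact Matrix.PosDef.posSemidef_add hSpsd
      (by rw [smul_one_eq_diagonal]; exact Matrix.posDef_diagonal_iff.mpr fun _ => hlpres)
  have hB2pd : B2.PosDef := by
    rw [hB2def]
    exact Matrix.PosDef.add_posSemidef hBpd
      (by rw [smul_one_eq_diagonal]
          exact Matrix.posSemidef_diagonal_iff.mpr fun _ => hlgeom)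
  have hBdet := (Matrix.isUnit_iff_isUnit_det _).mp hBpd.isUnit
  have hB2det := (Matrix.isUnit_iff_isUnit_det _).mp hB2pd.isUnit
  have hBinv : B * B⁻¹ = 1 := Matrix.mul_nonsing_inv _ hBdet
  have hBinv' : B⁻¹ * B = 1 := Matrix.nonsing_inv_mul _ hBdet
  have hB2inv : B2 * B2⁻¹ = 1 := Matrix.mul_nonsing_inv _ hB2det
  have hB2inv' : B2⁻¹ * B2 = 1 := Matrix.nonsing_inv_mul _ hB2det
  have hSB : S = B - lpres • 1 := by rw [hB]; abel
  have hSB2 : S = B2 - (lpres + lgeom) • 1 := by rw [hB2def, hB, add_smul]; abel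
  set X : Matrix (Fin d) (Fin k) ℝ := Phat * C * B⁻¹ with hX
  set Y : Matrix (Fin d) (Fin k) ℝ := Q * C * B2⁻¹ with hY
  clear_value X Y
  have hQX : Q * X = 0 := by
    rw [hX, ← Matrix.mul_assoc, ← Matrix.mul_assoc, hQP, Matrix.zero_mul, Matrix.zero_mul]
  have hQY : Q * Y = Y := by rw [hY, ← Matrix.mul_assoc, ← Matrix.mul_assoc, hQidem]
  have hXS : X * S = Phat * C - lpres • X := by
    rw [hSB, Matrix.mul_sub, Matrix.mul_smul, Matrix.mul_one, hX,
      Matrix.mul_assoc (Phat * C) B⁻¹ B, hBinv', Matrix.mul_one]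
  have hYS : Y * S = Q * C - (lpres + lgeom) • Y := by
    rw [hSB2, Matrix.mul_sub, Matrix.mul_smul, Matrix.mul_one, hY,
      Matrix.mul_assoc (Q * C) B2⁻¹ B2, hB2inv', Matrix.mul_one]
  have hPQC : Phat * C + Q * C = C := by rw [← Matrix.add_mul, hPQsum, Matrix.one_mul]
  -- normal equation
  have hNE : (lpres • (1 : Matrix (Fin d) (Fin d) ℝ) + lgeom • Q) * Wstar + Wstar * S =
      M + lpres • Wtilde := by
    rw [hWstar]
    have expand : (lpres • (1 : Matrix (Fin d) (Fin d) ℝ) + lgeom • Q) * (X + Y) +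
        (X + Y) * S
        = lpres • X + lpres • Y + lgeom • (Q * X) + lgeom • (Q * Y) + (X * S + Y * S) := by
      simp only [Matrix.add_mul, Matrix.mul_add, Matrix.smul_mul, Matrix.one_mul, smul_add]; abel
    rw [expand, hQX, hQY, smul_zero, hXS, hYS, ← hC]
    calc lpres • X + lpres • Y + 0 + lgeom • Y +
          (Phat * C - lpres • X + (Q * C - (lpres + lgeom) • Y))
        = Phat * C + Q * C := by rw [add_smul]; abel
      _ = C := hPQC
  -- uniqueness
  have hPA : Phat * (lpres • (1 : Matrix (Fin d) (Fin d) ℝ) + lgeom • Q) = lpres • Phat := by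
    rw [Matrix.mul_add, Matrix.mul_smul, Matrix.mul_one, Matrix.mul_smul, hPQ, smul_zero,
      add_zero]
  have hQA : Q * (lpres • (1 : Matrix (Fin d) (Fin d) ℝ) + lgeom • Q) =
      lpres • Q + lgeom • Q := by
    rw [Matrix.mul_add, Matrix.mul_smul, Matrix.mul_one, Matrix.mul_smul, hQidem]
  have huniq : ∀ W : Matrix (Fin d) (Fin k) ℝ,
      (lpres • (1 : Matrix (Fin d) (Fin d) ℝ) + lgeom • Q) * W + W * S =
        M + lpres • Wtilde → W = Wstar := by
    intro W hW
    have hWC : (lpres • (1 : Matrix (Fin d) (Fin d) ℝ) + lgeom • Q) * W + W * S = C :=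
      hW.trans hC.symm
    have hPWB : (Phat * W) * B = Phat * C := by
      have h := congrArg (fun Z => Phat * Z) hWC
      simp only [Matrix.mul_add] at h
      rw [← Matrix.mul_assoc, ← Matrix.mul_assoc, hPA, Matrix.smul_mul] at h
      rw [hB, Matrix.mul_add, Matrix.mul_smul, Matrix.mul_one]
      exact (add_comm _ _).trans h
    have hQWB : (Q * W) * B2 = Q * C := by
      have h := congrArg (fun Z => Q * Z) hWC
      simp only [Matrix.mul_add] at h
      rw [← Matrix.mul_assoc, ← Matrix.mul_assoc, hQA, Matrix.add_mul,
        Matrix.smul_mul, Matrix.smul_mul] at h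
      have hB2S : B2 = S + (lpres + lgeom) • 1 := by rw [hB2def, hB, add_smul]; abel
      rw [hB2S, Matrix.mul_add, Matrix.mul_smul, Matrix.mul_one, add_smul]
      rw [← h]; abel
    have hPW : Phat * W = X := by
      have h := congrArg (fun Z => Z * B⁻¹) hPWB
      rw [Matrix.mul_assoc, hBinv, Matrix.mul_one] at h
      exact h.trans hX.symm
    have hQW : Q * W = Y := by
      have h := congrArg (fun Z => Z * B2⁻¹) hQWB
      rw [Matrix.mul_assoc, hB2inv, Matrix.mul_one] at h
      exact h.trans hY.symm
    calc W = 1 * W := (Matrix.one_mul W).symm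
      _ = (Phat + Q) * W := by rw [hPQsum]
      _ = Phat * W + Q * W := Matrix.add_mul _ _ _
      _ = X + Y := by rw [hPW, hQW]
      _ = Wstar := hWstar.symm
  refine ⟨?_, hNE, huniq⟩
  -- strict minimality
  intro W hWne
  set D : Matrix (Fin d) (Fin k) ℝ := W - Wstar with hD
  clear_value D
  have hDne : D ≠ 0 := by rw [hD]; exact sub_ne_zero.mpr hWne
  have hWD : W = Wstar + D := by rw [hD]; abel
  have e1 : (∑ i, ∑ j, (hc i j - W.mulVec (zc i) j) ^ 2)
      = (∑ i, ∑ j, (hc i j - Wstar.mulVec (zc i) j) ^ 2)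
        - 2 * (∑ i, ∑ j, (hc i j - Wstar.mulVec (zc i) j) * (D.mulVec (zc i) j))
        + ∑ i, ∑ j, (D.mulVec (zc i) j) ^ 2 := by
    have hpt : ∀ i j, (hc i j - W.mulVec (zc i) j) ^ 2 =
        (hc i j - Wstar.mulVec (zc i) j) ^ 2
          - 2 * ((hc i j - Wstar.mulVec (zc i) j) * (D.mulVec (zc i) j))
          + (D.mulVec (zc i) j) ^ 2 := by
      intro i j
      rw [hWD, Matrix.add_mulVec, Pi.add_apply]
      ring
    simp only [hpt, Finset.sum_add_distrib, Finset.sum_sub_distrib, ← Finset.mul_sum]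
  have e2 : (∑ i, ∑ j, ((Q * W) i j) ^ 2)
      = (∑ i, ∑ j, ((Q * Wstar) i j) ^ 2) + 2 * gaeIP (Q * Wstar) (Q * D)
        + ∑ i, ∑ j, ((Q * D) i j) ^ 2 := by
    have hQW : Q * W = Q * Wstar + Q * D := by rw [hWD, Matrix.mul_add]
    have hpt : ∀ i j, ((Q * W) i j) ^ 2 =
        ((Q * Wstar) i j) ^ 2 + 2 * ((Q * Wstar) i j * (Q * D) i j) + ((Q * D) i j) ^ 2 := by
      intro i j
      rw [hQW, Matrix.add_apply]
      ring
    simp only [gaeIP, hpt, Finset.sum_add_distrib, ← Finset.mul_sum]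
  have e3 : (∑ i, ∑ j, ((W - Wtilde) i j) ^ 2)
      = (∑ i, ∑ j, ((Wstar - Wtilde) i j) ^ 2) + 2 * gaeIP (Wstar - Wtilde) D
        + ∑ i, ∑ j, (D i j) ^ 2 := by
    have hWt : W - Wtilde = (Wstar - Wtilde) + D := by rw [hD]; abel
    have hpt : ∀ i j, ((W - Wtilde) i j) ^ 2 =
        ((Wstar - Wtilde) i j) ^ 2 + 2 * ((Wstar - Wtilde) i j * D i j) + (D i j) ^ 2 := by
      intro i j
      rw [hWt, Matrix.add_apply]
      ring
    simp only [gaeIP, hpt, Finset.sum_add_distrib, ← Finset.mul_sum]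
  have c2eq : gaeIP (Q * Wstar) (Q * D) = gaeIP (Q * Wstar) D := by
    rw [gaeIP_trace, gaeIP_trace, Matrix.transpose_mul, hQsymm, Matrix.mul_assoc,
      Matrix.mul_assoc, ← Matrix.mul_assoc Q Q D, hQidem]
  have c1 : (N:ℝ)⁻¹ * (∑ i, ∑ j, (hc i j - Wstar.mulVec (zc i) j) * (D.mulVec (zc i) j))
      = gaeIP (M - Wstar * S) D := by
    have hsplit : ∀ i1, (∑ j, (hc i1 j - Wstar.mulVec (zc i1) j) * (D.mulVec (zc i1) j))
        = gaeIP (vecMulVec (hc i1) (zc i1)) D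
          - gaeIP (Wstar * vecMulVec (zc i1) (zc i1)) D := by
      intro i1
      rw [← gae_vecMulVec_mulVec_left, ← gae_dot_mulVec, ← gae_dot_mulVec,
        ← Finset.sum_sub_distrib]
      exact Finset.sum_congr rfl fun j _ => by ring
    have hWS : Wstar * S = (N:ℝ)⁻¹ • ∑ i, Wstar * vecMulVec (zc i) (zc i) := by
      rw [hSdef, Matrix.mul_smul, Matrix.mul_sum]
    rw [gaeIP_sub_left, hMdef, hWS, gaeIP_smul_left, gaeIP_smul_left,
      gaeIP_sum_left, gaeIP_sum_left, ← mul_sub, ← Finset.sum_sub_distrib]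
    congr 1
    exact Finset.sum_congr rfl fun i _ => hsplit i
  have hmat : M - Wstar * S = lgeom • (Q * Wstar) + lpres • (Wstar - Wtilde) := by
    have h := hNE
    rw [Matrix.add_mul, Matrix.smul_mul, Matrix.one_mul, Matrix.smul_mul] at h
    have h'' : M = lpres • Wstar + lgeom • (Q * Wstar) + Wstar * S - lpres • Wtilde :=
      eq_sub_iff_add_eq.mpr h.symm
    rw [h'', smul_sub]; abel
  have ccancel : (N:ℝ)⁻¹ *
      (∑ i, ∑ j, (hc i j - Wstar.mulVec (zc i) j) * (D.mulVec (zc i) j))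
      = lgeom * gaeIP (Q * Wstar) D + lpres * gaeIP (Wstar - Wtilde) D := by
    rw [c1, hmat, gaeIP_add_left, gaeIP_smul_left, gaeIP_smul_left]
  have key : F W = F Wstar +
      ((N:ℝ)⁻¹ * (∑ i, ∑ j, (D.mulVec (zc i) j) ^ 2)
        + lgeom * (∑ i, ∑ j, ((Q * D) i j) ^ 2)
        + lpres * (∑ i, ∑ j, (D i j) ^ 2)) := by
    rw [hF]
    simp only [frobNorm_sq]
    rw [e1, e2, e3, c2eq]
    linear_combination (-2 : ℝ) * ccancel
  rw [key]
  have hD2 : 0 < ∑ i, ∑ j, (D i j) ^ 2 := by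
    obtain ⟨i, j, hij⟩ : ∃ i j, D i j ≠ 0 := by
      by_contra h
      push_neg at h
      exact hDne (by ext i j; simpa using h i j)
    have h1 : 0 < ∑ j, (D i j) ^ 2 :=
      Finset.sum_pos' (fun _ _ => sq_nonneg _) ⟨j, Finset.mem_univ j, by positivity⟩
    exact Finset.sum_pos' (fun _ _ => Finset.sum_nonneg fun _ _ => sq_nonneg _)
      ⟨i, Finset.mem_univ i, h1⟩
  have p1 : 0 ≤ (N:ℝ)⁻¹ * (∑ i, ∑ j, (D.mulVec (zc i) j) ^ 2) :=
    mul_nonneg (by positivity)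
      (Finset.sum_nonneg fun _ _ => Finset.sum_nonneg fun _ _ => sq_nonneg _)
  have p2 : 0 ≤ lgeom * (∑ i, ∑ j, ((Q * D) i j) ^ 2) :=
    mul_nonneg hlgeom
      (Finset.sum_nonneg fun _ _ => Finset.sum_nonneg fun _ _ => sq_nonneg _)
  have p3 : 0 < lpres * (∑ i, ∑ j, (D i j) ^ 2) := mul_pos hlpres hD2
  linarith
end
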